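/- Approximation guarantee for volume-densest subhypergraph: the greedy peeling algorithm that repeatedly removes a node with minimum current neighborhood size returns a node set whose volume-density is at least ρ*/(d_pair(d_card−2)+2), where ρ* is the maximum volume-density over all subsets. -/

import Mathlib

open Finset

variable {α : Type*} [DecidableEq α]

-- Neighbors of `v` within the strongly induced subhypergraph `H[S]`.
open Classical in
noncomputable def nbr (E : Finset (Finset α)) (S : Finset α) (v : α) : Finset α :=
  S.filter (fun u => u ≠ v ∧ ∃ e ∈ E, e ⊆ S ∧ v ∈ e ∧ u ∈ e)

/-- `S` is `k`-cohesive: every node of `S` has at least `k` neighbors in `H[S]`. -/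
def cohesive (E : Finset (Finset α)) (k : ℕ) (S : Finset α) : Prop :=
  ∀ v ∈ S, k ≤ (nbr E S v).card

/-- Volume-density of a node set `S`. -/
noncomputable def density (E : Finset (Finset α)) (S : Finset α) : ℚ :=
  (∑ u ∈ S, ((nbr E S u).card : ℚ)) / S.card

lemma mem_nbr {E : Finset (Finset α)} {S : Finset α} {v u : α} :
    u ∈ nbr E S v ↔ u ∈ S ∧ u ≠ v ∧ ∃ e ∈ E, e ⊆ S ∧ v ∈ e ∧ u ∈ e := by
  classical
  simp [nbr]

lemma nbr_subset_erase {E : Finset (Finset α)} {S : Finset α} {v : α} :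
    nbr E S v ⊆ S.erase v := by
  intro u hu
  rw [mem_nbr] at hu
  exact Finset.mem_erase.2 ⟨hu.2.1, hu.1⟩

lemma nbr_mono {E : Finset (Finset α)} {S T : Finset α} (h : S ⊆ T) (v : α) :
    nbr E S v ⊆ nbr E T v := by
  intro u hu
  rw [mem_nbr] at hu ⊢
  obtain ⟨hS, hne, e, he, heS, hv, hue⟩ := hu
  exact ⟨h hS, hne, e, he, heS.trans h, hv, hue⟩

lemma nbr_symm {E : Finset (Finset α)} {S : Finset α} {v u : α}
    (h : u ∈ nbr E S v) : v ∈ nbr E S u := by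
  rw [mem_nbr] at h ⊢
  obtain ⟨hS, hne, e, he, heS, hv, hue⟩ := h
  exact ⟨heS hv, hne.symm, e, he, heS, hue, hv⟩

lemma density_nonneg (E : Finset (Finset α)) (S : Finset α) : 0 ≤ density E S := by
  apply div_nonneg
  · exact Finset.sum_nonneg fun u _ => by positivity
  · positivity

lemma nbr_erase_bound (E : Finset (Finset α)) (dcard dpair : ℕ)
    (hcard : ∀ e ∈ E, e.card ≤ dcard)
    (hpair : ∀ u w : α, u ≠ w → (E.filter (fun e => u ∈ e ∧ w ∈ e)).card ≤ dpair)
    (S : Finset α) (v : α) {u : α} (hu : u ∈ S.erase v) :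
    (nbr E S u).card ≤ (nbr E (S.erase v) u).card +
      (if u ∈ nbr E S v then dpair * (dcard - 2) + 1 else 0) := by
  classical
  obtain ⟨huv, huS⟩ := Finset.mem_erase.1 hu
  by_cases hN : u ∈ nbr E S v
  · rw [if_pos hN]
    set B := (E.filter (fun e => e ⊆ S ∧ u ∈ e ∧ v ∈ e)).biUnion
        (fun e => (e.erase u).erase v) with hB
    have hsub : nbr E S u ⊆ nbr E (S.erase v) u ∪ insert v B := by
      intro w hw
      rw [mem_nbr] at hw
      obtain ⟨hwS, hwu, e, he, heS, hue, hwe⟩ := hw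
      by_cases hwv : w = v
      · exact Finset.mem_union_right _ (hwv ▸ Finset.mem_insert_self _ _)
      by_cases hve : v ∈ e
      · refine Finset.mem_union_right _ (Finset.mem_insert_of_mem ?_)
        rw [hB, Finset.mem_biUnion]
        exact ⟨e, Finset.mem_filter.2 ⟨he, heS, hue, hve⟩,
          Finset.mem_erase.2 ⟨hwv, Finset.mem_erase.2 ⟨hwu, hwe⟩⟩⟩
      · refine Finset.mem_union_left _ ?_
        rw [mem_nbr]
        refine ⟨Finset.mem_erase.2 ⟨hwv, hwS⟩, hwu, e, he, ?_, hue, hwe⟩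
        intro x hx
        exact Finset.mem_erase.2 ⟨fun hxv => hve (hxv ▸ hx), heS hx⟩
    have hBcard : B.card ≤ dpair * (dcard - 2) := by
      calc B.card ≤ ∑ e ∈ E.filter (fun e => e ⊆ S ∧ u ∈ e ∧ v ∈ e),
            ((e.erase u).erase v).card := Finset.card_biUnion_le
        _ ≤ ∑ _e ∈ E.filter (fun e => e ⊆ S ∧ u ∈ e ∧ v ∈ e), (dcard - 2) := by
            apply Finset.sum_le_sum
            intro e he
            obtain ⟨heE, _, hue, hve⟩ := Finset.mem_filter.1 he
            have h1 : ((e.erase u).erase v).card = e.card - 1 - 1 := by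
              rw [Finset.card_erase_of_mem, Finset.card_erase_of_mem hue]
              exact Finset.mem_erase.2 ⟨fun h => huv h.symm, hve⟩
            have h2 := hcard e heE
            omega
        _ = (E.filter (fun e => e ⊆ S ∧ u ∈ e ∧ v ∈ e)).card * (dcard - 2) := by
            rw [Finset.sum_const, smul_eq_mul]
        _ ≤ dpair * (dcard - 2) := by
            apply Nat.mul_le_mul_right
            calc (E.filter (fun e => e ⊆ S ∧ u ∈ e ∧ v ∈ e)).card
                ≤ (E.filter (fun e => u ∈ e ∧ v ∈ e)).card := by
                  apply Finset.card_le_card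
                  apply Finset.monotone_filter_right
                  intro e h
                  exact fun h' => ⟨h'.2.1, h'.2.2⟩
              _ ≤ dpair := hpair u v huv
    calc (nbr E S u).card ≤ (nbr E (S.erase v) u ∪ insert v B).card :=
          Finset.card_le_card hsub
      _ ≤ (nbr E (S.erase v) u).card + (insert v B).card := Finset.card_union_le _ _
      _ ≤ (nbr E (S.erase v) u).card + (B.card + 1) := by
          have := Finset.card_insert_le v B
          omega
      _ ≤ (nbr E (S.erase v) u).card + (dpair * (dcard - 2) + 1) := by omega
  · rw [if_neg hN]
    rw [Nat.add_zero]
    apply Finset.card_le_card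
    intro w hw
    rw [mem_nbr] at hw
    obtain ⟨hwS, hwu, e, he, heS, hue, hwe⟩ := hw
    have hve : v ∉ e := by
      intro hve
      exact hN (mem_nbr.2 ⟨huS, huv, e, he, heS, hve, hue⟩)
    have hwv : w ≠ v := fun h => hve (h ▸ hwe)
    rw [mem_nbr]
    refine ⟨Finset.mem_erase.2 ⟨hwv, hwS⟩, hwu, e, he, ?_, hue, hwe⟩
    intro x hx
    exact Finset.mem_erase.2 ⟨fun hxv => hve (hxv ▸ hx), heS hx⟩

lemma key_sum (E : Finset (Finset α)) (dcard dpair : ℕ)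
    (hcard : ∀ e ∈ E, e.card ≤ dcard)
    (hpair : ∀ u w : α, u ≠ w → (E.filter (fun e => u ∈ e ∧ w ∈ e)).card ≤ dpair)
    (S : Finset α) {v : α} (hv : v ∈ S) :
    ∑ u ∈ S, (nbr E S u).card ≤
      (dpair * (dcard - 2) + 2) * (nbr E S v).card +
        ∑ u ∈ S.erase v, (nbr E (S.erase v) u).card := by
  classical
  rw [← Finset.add_sum_erase _ _ hv]
  have h1 : ∑ u ∈ S.erase v, (nbr E S u).card ≤
      ∑ u ∈ S.erase v, ((nbr E (S.erase v) u).card +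
        (if u ∈ nbr E S v then dpair * (dcard - 2) + 1 else 0)) :=
    Finset.sum_le_sum fun u hu => nbr_erase_bound E dcard dpair hcard hpair S v hu
  rw [Finset.sum_add_distrib] at h1
  have h2 : ∑ u ∈ S.erase v, (if u ∈ nbr E S v then dpair * (dcard - 2) + 1 else 0)
      = (nbr E S v).card * (dpair * (dcard - 2) + 1) := by
    rw [Finset.sum_ite_mem, Finset.inter_eq_right.2 nbr_subset_erase,
      Finset.sum_const, smul_eq_mul]
  rw [h2] at h1
  have : (nbr E S v).card + ((nbr E S v).card * (dpair * (dcard - 2) + 1))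
      = (dpair * (dcard - 2) + 2) * (nbr E S v).card := by ring
  omega

lemma max_deg_bound (E : Finset (Finset α)) (dcard dpair : ℕ)
    (hcard : ∀ e ∈ E, e.card ≤ dcard)
    (hpair : ∀ u w : α, u ≠ w → (E.filter (fun e => u ∈ e ∧ w ∈ e)).card ≤ dpair)
    (S : Finset α) {v : α} (hv : v ∈ S)
    (hmax : density E (S.erase v) ≤ density E S) :
    density E S ≤ ((dpair * (dcard - 2) + 2 : ℕ) : ℚ) * (nbr E S v).card := by
  classical
  set q := density E S with hq
  have hn : (0 : ℚ) < (S.card : ℚ) := by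
    exact_mod_cast Finset.card_pos.2 ⟨v, hv⟩
  have hD : (∑ u ∈ S, ((nbr E S u).card : ℚ)) = q * S.card := by
    rw [hq, density, div_mul_cancel₀ _ (ne_of_gt hn)]
  have hkey := key_sum E dcard dpair hcard hpair S hv
  have hkeyQ : (∑ u ∈ S, ((nbr E S u).card : ℚ)) ≤
      ((dpair * (dcard - 2) + 2 : ℕ) : ℚ) * (nbr E S v).card +
        ∑ u ∈ S.erase v, ((nbr E (S.erase v) u).card : ℚ) := by
    exact_mod_cast hkey
  have hD' : ∑ u ∈ S.erase v, ((nbr E (S.erase v) u).card : ℚ) ≤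
      q * ((S.card : ℚ) - 1) := by
    rcases Finset.eq_empty_or_nonempty (S.erase v) with he | he
    · rw [he, Finset.sum_empty]
      have h1 : S.card = 1 := by
        have h0 : 0 < S.card := Finset.card_pos.2 ⟨v, hv⟩
        have := Finset.card_erase_of_mem hv
        rw [he] at this
        simp at this
        omega
      rw [h1]
      norm_num
    · have hc : (0 : ℚ) < ((S.erase v).card : ℚ) := by
        exact_mod_cast Finset.card_pos.2 he
      have h2 : ∑ u ∈ S.erase v, ((nbr E (S.erase v) u).card : ℚ)
          = density E (S.erase v) * (S.erase v).card := by
        rw [density, div_mul_cancel₀ _ (ne_of_gt hc)]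
      rw [h2]
      have h3 : ((S.erase v).card : ℚ) = (S.card : ℚ) - 1 := by
        rw [Finset.card_erase_of_mem hv]
        have : 1 ≤ S.card := Finset.card_pos.2 ⟨v, hv⟩
        push_cast [Nat.cast_sub this]
        ring
      rw [h3]
      apply mul_le_mul_of_nonneg_right hmax
      linarith
  rw [hD] at hkeyQ
  nlinarith

variable [Fintype α]

/-- Approximation guarantee of greedy peeling for the volume-densest
subhypergraph: some intermediate set has density at least
`ρ* / (d_pair·(d_card − 2) + 2)`. -/
theorem greedy_approx (E : Finset (Finset α)) (dcard dpair : ℕ)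
    (hcard : ∀ e ∈ E, e.card ≤ dcard)
    (hpair : ∀ u w : α, u ≠ w → (E.filter (fun e => u ∈ e ∧ w ∈ e)).card ≤ dpair)
    (seq : ℕ → Finset α) (h0 : seq 0 = Finset.univ)
    (hstep : ∀ i : ℕ, (seq i).Nonempty →
      ∃ v ∈ seq i, (∀ u ∈ seq i, (nbr E (seq i) v).card ≤ (nbr E (seq i) u).card) ∧
        seq (i + 1) = (seq i).erase v)
    (Sstar : Finset α) :
    ∃ i : ℕ, density E Sstar ≤ ((dpair * (dcard - 2) + 2 : ℕ) : ℚ) * density E (seq i) := by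
  classical
  set C : ℚ := ((dpair * (dcard - 2) + 2 : ℕ) : ℚ) with hCdef
  have hC : (0 : ℚ) < C := by
    rw [hCdef]
    exact_mod_cast Nat.succ_le_succ (Nat.zero_le _)
  obtain ⟨Smax, -, hmax⟩ := Finset.exists_max_image (univ : Finset α).powerset
    (density E) ⟨∅, Finset.mem_powerset.2 (Finset.empty_subset _)⟩
  have hmax' : ∀ T : Finset α, density E T ≤ density E Smax := fun T =>
    hmax T (Finset.mem_powerset.2 (Finset.subset_univ _))
  have hSstar : density E Sstar ≤ density E Smax := hmax' _
  by_cases hρ : density E Smax ≤ 0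
  · refine ⟨0, hSstar.trans (hρ.trans ?_)⟩
    exact mul_nonneg hC.le (density_nonneg E _)
  push_neg at hρ
  -- Smax is nonempty
  have hSmax_ne : Smax.Nonempty := by
    rcases Finset.eq_empty_or_nonempty Smax with h | h
    · exfalso
      rw [h, density] at hρ
      simp at hρ
    · exact h
  obtain ⟨w, hw⟩ := hSmax_ne
  -- every vertex of Smax has large degree
  have hdeg : ∀ v ∈ Smax, density E Smax ≤ C * (nbr E Smax v).card := fun v hv =>
    max_deg_bound E dcard dpair hcard hpair Smax hv (hmax' _)
  -- find the first index where Smax is no longer contained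
  have hnotall : ¬ ∀ i, Smax ⊆ seq i := by
    intro hall
    have hcards : ∀ i, (seq i).card + i ≤ Fintype.card α := by
      intro i
      induction i with
      | zero => simp [h0]
      | succ n ih =>
        obtain ⟨v, hvmem, -, hstepeq⟩ := hstep n ⟨w, hall n hw⟩
        rw [hstepeq, Finset.card_erase_of_mem hvmem]
        have h1 : 1 ≤ (seq n).card := Finset.card_pos.2 ⟨v, hvmem⟩
        omega
    have h1 := hcards (Fintype.card α + 1)
    have h2 : 1 ≤ (seq (Fintype.card α + 1)).card :=
      Finset.card_pos.2 ⟨w, hall _ hw⟩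
    omega
  have hex : ∃ i, ¬ Smax ⊆ seq i := not_forall.1 hnotall
  set j := Nat.find hex with hj
  have hjspec : ¬ Smax ⊆ seq j := Nat.find_spec hex
  have hjpos : 0 < j := by
    rcases Nat.eq_zero_or_pos j with h | h
    · exfalso; apply hjspec; rw [h, h0]; exact Finset.subset_univ _
    · exact h
  set i := j - 1 with hi
  have hij : i + 1 = j := by omega
  have hsub : Smax ⊆ seq i := by
    by_contra h
    exact absurd (Nat.find_min hex (show i < j by omega)) (fun h' => h' h)
  have hne : (seq i).Nonempty := ⟨w, hsub hw⟩
  obtain ⟨v, hvmem, hvmin, heq⟩ := hstep i hne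
  have hvS : v ∈ Smax := by
    by_contra hv
    apply hjspec
    rw [← hij, heq]
    exact Finset.subset_erase.2 ⟨hsub, hv⟩
  -- every vertex of seq i has degree at least (density Smax)/C
  have hbound : ∀ u ∈ seq i, density E Smax ≤ C * (nbr E (seq i) u).card := by
    intro u hu
    calc density E Smax ≤ C * (nbr E Smax v).card := hdeg v hvS
      _ ≤ C * (nbr E (seq i) v).card := by
          apply mul_le_mul_of_nonneg_left _ hC.le
          exact_mod_cast Finset.card_le_card (nbr_mono hsub v)
      _ ≤ C * (nbr E (seq i) u).card := by
          apply mul_le_mul_of_nonneg_left _ hC.le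
          exact_mod_cast hvmin u hu
  refine ⟨i, hSstar.trans ?_⟩
  have hn : (0 : ℚ) < ((seq i).card : ℚ) := by
    exact_mod_cast Finset.card_pos.2 hne
  have hsum : ((seq i).card : ℚ) * density E Smax ≤
      C * (density E (seq i) * (seq i).card) := by
    have h1 : (seq i).card • density E Smax ≤
        ∑ u ∈ seq i, C * ((nbr E (seq i) u).card : ℚ) :=
      Finset.card_nsmul_le_sum _ _ _ hbound
    rw [← Finset.mul_sum] at h1
    have h2 : ∑ u ∈ seq i, ((nbr E (seq i) u).card : ℚ)
        = density E (seq i) * (seq i).card := by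
      rw [density, div_mul_cancel₀ _ (ne_of_gt hn)]
    rw [h2] at h1
    simpa [nsmul_eq_mul] using h1
  have := le_of_mul_le_mul_right (by linarith [hsum] : density E Smax * ((seq i).card : ℚ)
      ≤ C * density E (seq i) * ((seq i).card : ℚ)) hn
  linarith
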